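/- Let λ = (λ₁ ≥ … ≥ λ_n) ∈ Part(m,n) and let (2,1^{m−1}) ∈ Part(m+1,m) be the partition of m+1 with one part equal to 2 and m−1 parts equal to 1. Then in K[Part(m+1,n)] one has δ_λ * δ_{(2,1^{m−1})} = (1/m) Σ_{i=1}^{n} λ_i · δ_{λ^{(i)}}, where λ^{(i)} is the partition of m+1 into n parts obtained from λ by replacing the part λ_i by λ_i + 1 (the sum runs over the n parts of λ counted with multiplicity). -/

import Mathlib

open Finset

/-- The multiset of fiber cardinalities of a map `f : Fin a → Fin b`. -/
def proj {a b : ℕ} (f : Fin a → Fin b) : Multiset ℕ :=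
  Multiset.map (fun i : Fin b => (Finset.univ.filter fun j => f j = i).card)
    (Finset.univ : Finset (Fin b)).val

/-- The composite `δ_{proj f} * δ_{proj g} = (1/m!) Σ_{σ ∈ S_m} δ_{proj (f∘σ∘g)}`,
for representatives `f : Fin m → Fin n` and `g : Fin l → Fin m`, with values in the
free `K`-vector space on multisets of natural numbers (in which the free vector
space `K[Part(l,n)]` on partitions embeds). -/
noncomputable def starElt (K : Type) [Field K] {l m n : ℕ}
    (f : Fin m → Fin n) (g : Fin l → Fin m) : Multiset ℕ →₀ K :=
  (m.factorial : K)⁻¹ •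
    ∑ σ : Equiv.Perm (Fin m), Finsupp.single (proj (f ∘ ⇑σ ∘ g)) (1 : K)

/-- `δ_λ * δ_μ`, defined via a choice of representatives (independent of the choice). -/
noncomputable def starOf (K : Type) [Field K] (m n l : ℕ) (lam mu : Multiset ℕ) :
    Multiset ℕ →₀ K :=
  if h : (∃ f : Fin m → Fin n, Function.Surjective f ∧ proj f = lam) ∧
      (∃ g : Fin l → Fin m, Function.Surjective g ∧ proj g = mu) then
    starElt K h.1.choose h.2.choose
  else 0

/-- The composition `* : K[Part(m,n)] × K[Part(l,m)] → K[Part(l,n)]`, as the bilinear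
extension of `δ_λ * δ_μ = (1/m!) Σ_{σ ∈ S_m} δ_{proj (f∘σ∘g)}` (representatives
`proj f = λ`, `proj g = μ`). -/
noncomputable def starComp (K : Type) [Field K] (m n l : ℕ)
    (x y : Multiset ℕ →₀ K) : Multiset ℕ →₀ K :=
  ∑ a ∈ x.support, ∑ b ∈ y.support, (x a * y b) • starOf K m n l a b

/-- The set of order-preserving surjections `Fin m → Fin n`. -/
noncomputable def OSurj (m n : ℕ) : Finset (Fin m → Fin n) :=
  open scoped Classical in
  Finset.univ.filter fun s => Monotone s ∧ Function.Surjective s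

/-- `Q_{m,n}`, the uniform average of the `δ_{proj s}` over order-preserving
surjections `s : Fin m → Fin n`. -/
noncomputable def Q (K : Type) [Field K] (m n : ℕ) : Multiset ℕ →₀ K :=
  ((OSurj m n).card : K)⁻¹ • ∑ s ∈ OSurj m n, Finsupp.single (proj s) (1 : K)

/-- `Ppart K n k = P_{n+k,n}` where `P_{n,n} = δ_{(1^n)}`,
`P_{m+1,n} = P_{m,n} * δ_{(2,1^{m-1})}` (so `P_{m,n} = P_{n+1,n} * … * P_{m,m−1}`). -/
noncomputable def Ppart (K : Type) [Field K] (n : ℕ) : ℕ → (Multiset ℕ →₀ K)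
  | 0 => Finsupp.single (Multiset.replicate n 1) 1
  | k + 1 => starComp K (n + k) n (n + k + 1) (Ppart K n k)
      (Finsupp.single (2 ::ₘ Multiset.replicate (n + k - 1) 1) 1)

/-- The monoidal product `⊙ : K[Part(m,n)] × K[Part(m',n')] → K[Part(m+m',n+n')]`,
bilinear extension of `δ_λ ⊙ δ_μ = (−1)^{(m−n)n'} Q_{m+m',n+n'}`. -/
noncomputable def odot (K : Type) [Field K] (m n m' n' : ℕ)
    (x y : Multiset ℕ →₀ K) : Multiset ℕ →₀ K :=
  ∑ a ∈ x.support, ∑ b ∈ y.support,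
    (x a * y b) • ((-1 : K) ^ ((m - n) * n') • Q K (m + m') (n + n'))

/-- The subtype of the sigma over the fiber at `i` is equivalent to that fiber. -/
def sigmaFiberEquivAux {N : ℕ} (ℓ : Fin N → ℕ) (i : Fin N) :
    {s : Σ j : Fin N, Fin (ℓ j) // s.1 = i} ≃ Fin (ℓ i) where
  toFun s := s.2 ▸ s.1.2
  invFun y := ⟨⟨i, y⟩, rfl⟩
  left_inv := by rintro ⟨⟨j, y⟩, rfl⟩; rfl
  right_inv y := rfl

lemma exists_surj_proj {N M : ℕ} (μ : Multiset ℕ) (hcard : Multiset.card μ = N)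
    (hsum : μ.sum = M) (hpos : ∀ x ∈ μ, 0 < x) :
    ∃ f : Fin M → Fin N, Function.Surjective f ∧ proj f = μ := by
  classical
  obtain ⟨L, rfl⟩ : ∃ L : List ℕ, (L : Multiset ℕ) = μ := ⟨μ.toList, μ.coe_toList⟩
  have hlen : L.length = N := by simpa using hcard
  set ℓ : Fin N → ℕ := fun i => L.get ⟨i.1, by omega⟩ with hℓ
  have hofn : List.ofFn ℓ = L := by
    apply List.ext_get (by simp [hlen])
    intro i h1 h2
    simp [hℓ]
  have huniv : (Finset.univ.val.map ℓ) = (L : Multiset ℕ) := by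
    rw [Fin.univ_val_map, hofn]
  have hcardS : Fintype.card (Σ i : Fin N, Fin (ℓ i)) = M := by
    rw [Fintype.card_sigma]
    simp only [Fintype.card_fin]
    calc ∑ i, ℓ i = (Finset.univ.val.map ℓ).sum := rfl
      _ = M := by rw [huniv]; exact hsum
  have e : Fin M ≃ (Σ i : Fin N, Fin (ℓ i)) :=
    Fintype.equivOfCardEq (by rw [hcardS, Fintype.card_fin])
  refine ⟨fun j => (e j).1, ?_, ?_⟩
  · intro i
    have hpos' : 0 < ℓ i := hpos _ (by
      rw [← huniv]; exact Multiset.mem_map_of_mem _ (Finset.mem_univ_val i))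
    exact ⟨e.symm ⟨i, ⟨0, hpos'⟩⟩, by simp⟩
  · have hfib : ∀ i : Fin N,
        (Finset.univ.filter fun j => (e j).1 = i).card = ℓ i := by
      intro i
      rw [← Fintype.card_subtype]
      rw [Fintype.card_congr ((e.subtypeEquiv (fun j => Iff.rfl)).trans
        (sigmaFiberEquivAux ℓ i))]
      exact Fintype.card_fin _
    calc proj (fun j => (e j).1) = Finset.univ.val.map ℓ :=
          Multiset.map_congr rfl (fun i _ => hfib i)
      _ = _ := huniv

lemma starElt_eq (K : Type) [Field K] [CharZero K] {m n : ℕ}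
    (lam : Multiset ℕ) (hm : 1 ≤ m)
    (f : Fin m → Fin n) (hf : Function.Surjective f) (hpf : proj f = lam)
    (g : Fin (m + 1) → Fin m) (hg : Function.Surjective g)
    (hpg : proj g = 2 ::ₘ Multiset.replicate (m - 1) 1) :
    starElt K f g =
      (m : K)⁻¹ • (lam.map fun a : ℕ =>
        (a : K) • Finsupp.single ((a + 1) ::ₘ lam.erase a) (1 : K)).sum := by
  classical
  obtain ⟨m', rfl⟩ : ∃ m', m = m' + 1 := ⟨m - 1, by omega⟩
  set F : Fin n → ℕ := fun i => (Finset.univ.filter fun j => f j = i).card with hF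
  set G : Fin (m' + 1) → ℕ :=
    fun k => (Finset.univ.filter fun j => g j = k).card with hG
  have hpf' : Multiset.map F Finset.univ.val = lam := hpf
  have hpg' : Multiset.map G Finset.univ.val
      = 2 ::ₘ Multiset.replicate m' 1 := by
    have := hpg
    rw [Nat.add_sub_cancel] at this
    exact this
  -- find the doubled fiber k₀ of g
  have h2 : 2 ∈ Multiset.map G Finset.univ.val := by
    rw [hpg']; exact Multiset.mem_cons_self _ _
  obtain ⟨k₀, -, hk₀⟩ := Multiset.mem_map.mp h2
  have huniv_k : (Finset.univ.val : Multiset (Fin (m' + 1)))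
      = k₀ ::ₘ Finset.univ.val.erase k₀ :=
    (Multiset.cons_erase (Finset.mem_univ_val k₀)).symm
  have htail : Multiset.map G (Finset.univ.val.erase k₀)
      = Multiset.replicate m' 1 := by
    have h := hpg'
    rw [huniv_k, Multiset.map_cons, hk₀] at h
    exact (Multiset.cons_inj_right 2).mp h
  have hG1 : ∀ k, k ≠ k₀ → G k = 1 := by
    intro k hk
    have hkmem : k ∈ Finset.univ.val.erase k₀ := by
      have hnd : (Finset.univ.val : Multiset (Fin (m' + 1))).Nodup := Finset.univ.nodup
      exact (hnd.mem_erase_iff).mpr ⟨hk, Finset.mem_univ_val k⟩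
    exact Multiset.eq_of_mem_replicate (htail ▸ Multiset.mem_map_of_mem G hkmem)
  -- fiber counting for f ∘ σ ∘ g
  have hfib : ∀ (σ : Equiv.Perm (Fin (m' + 1))) (i : Fin n),
      (Finset.univ.filter fun j => (f ∘ ⇑σ ∘ g) j = i).card
        = F i + (if f (σ k₀) = i then 1 else 0) := by
    intro σ i
    simp only [Function.comp_apply]
    rw [Finset.card_eq_sum_card_fiberwise
      (f := g) (t := Finset.univ.filter fun k => f (σ k) = i)
      (fun j hj => by
        simp only [Finset.mem_coe, Finset.mem_filter, Finset.mem_univ, true_and] at hj ⊢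
        exact hj)]
    have hsf : ∀ k ∈ (Finset.univ.filter fun k => f (σ k) = i),
        ((Finset.univ.filter fun j => f (σ (g j)) = i).filter
          fun j => g j = k).card = G k := by
      intro k hk
      rw [Finset.mem_filter] at hk
      congr 1
      ext j
      simp only [Finset.mem_filter, Finset.mem_univ, true_and]
      constructor
      · rintro ⟨-, h⟩; exact h
      · intro h; exact ⟨by rw [h]; exact hk.2, h⟩
    rw [Finset.sum_congr rfl hsf]
    have hGsplit : ∀ k ∈ (Finset.univ.filter fun k => f (σ k) = i),
        G k = 1 + (if k = k₀ then 1 else 0) := by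
      intro k _
      by_cases hk : k = k₀
      · simp [hk, hk₀]
      · simp [hk, hG1 k hk]
    rw [Finset.sum_congr rfl hGsplit, Finset.sum_add_distrib, Finset.sum_const,
      Finset.sum_ite_eq' (Finset.univ.filter fun k => f (σ k) = i) k₀ (fun _ => 1)]
    have htcard : (Finset.univ.filter fun k => f (σ k) = i).card = F i := by
      rw [hF]
      apply Finset.card_bij (fun k _ => σ k)
      · intro k hk
        simp only [Finset.mem_filter, Finset.mem_univ, true_and] at hk ⊢
        exact hk
      · intro a _ b _ hab
        exact σ.injective hab
      · intro b hb
        simp only [Finset.mem_filter, Finset.mem_univ, true_and] at hb ⊢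
        exact ⟨σ.symm b, by simp [hb], by simp⟩
    rw [htcard]
    have : k₀ ∈ (Finset.univ.filter fun k => f (σ k) = i) ↔ f (σ k₀) = i := by
      simp
    by_cases hc : f (σ k₀) = i
    · rw [if_pos (this.mpr hc), if_pos hc]; ring
    · rw [if_neg (fun hmem => hc (this.mp hmem)), if_neg hc]; ring
  -- proj of f ∘ σ ∘ g
  have hproj : ∀ σ : Equiv.Perm (Fin (m' + 1)),
      proj (f ∘ ⇑σ ∘ g)
        = (F (f (σ k₀)) + 1) ::ₘ lam.erase (F (f (σ k₀))) := by
    intro σ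
    set i₀ := f (σ k₀) with hi₀
    have huniv_i : (Finset.univ.val : Multiset (Fin n))
        = i₀ ::ₘ Finset.univ.val.erase i₀ :=
      (Multiset.cons_erase (Finset.mem_univ_val i₀)).symm
    have hlam : lam = F i₀ ::ₘ Multiset.map F (Finset.univ.val.erase i₀) := by
      conv_lhs => rw [← hpf', huniv_i, Multiset.map_cons]
    have herase : lam.erase (F i₀)
        = Multiset.map F (Finset.univ.val.erase i₀) := by
      rw [hlam, Multiset.erase_cons_head]
    show Multiset.map _ Finset.univ.val = _
    rw [huniv_i, Multiset.map_cons]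
    congr 1
    · rw [hfib σ i₀, if_pos rfl]
    · rw [herase]
      apply Multiset.map_congr rfl
      intro i hi
      have hne : i ≠ i₀ := by
        have hnd : (Finset.univ.val : Multiset (Fin n)).Nodup := Finset.univ.nodup
        exact ((hnd.mem_erase_iff).mp hi).1
      rw [hfib σ i, if_neg (fun h => hne h.symm), add_zero]
  -- now compute the sum over permutations
  set T : Fin (m' + 1) → (Multiset ℕ →₀ K) :=
    fun j => Finsupp.single ((F (f j) + 1) ::ₘ lam.erase (F (f j))) (1 : K) with hT
  have hsum1 : ∑ σ : Equiv.Perm (Fin (m' + 1)),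
      Finsupp.single (proj (f ∘ ⇑σ ∘ g)) (1 : K) = ∑ σ : Equiv.Perm (Fin (m' + 1)), T (σ k₀) :=
    Finset.sum_congr rfl fun σ _ => by rw [hproj σ]
  have hswap : ∑ σ : Equiv.Perm (Fin (m' + 1)), T (σ k₀)
      = ∑ σ : Equiv.Perm (Fin (m' + 1)), T (σ 0) :=
    Fintype.sum_equiv (Equiv.mulRight (Equiv.swap 0 k₀))
      (fun σ => T (σ k₀)) (fun σ => T (σ 0))
      (fun σ => by
        simp [Equiv.Perm.mul_apply, Equiv.swap_apply_left])
  have hdec : ∑ σ : Equiv.Perm (Fin (m' + 1)), T (σ 0)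
      = m'.factorial • ∑ j : Fin (m' + 1), T j := by
    calc ∑ σ : Equiv.Perm (Fin (m' + 1)), T (σ 0)
        = ∑ pe : Fin (m' + 1) × Equiv.Perm (Fin m'),
            T (Equiv.Perm.decomposeFin.symm pe 0) :=
          (Equiv.Perm.decomposeFin.symm.sum_comp (fun σ => T (σ 0))).symm
      _ = ∑ pe : Fin (m' + 1) × Equiv.Perm (Fin m'), T pe.1 := by
          apply Finset.sum_congr rfl
          rintro ⟨p, e⟩ -
          rw [Equiv.Perm.decomposeFin_symm_apply_zero]
      _ = ∑ p : Fin (m' + 1), ∑ _e : Equiv.Perm (Fin m'), T p :=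
          Fintype.sum_prod_type _
      _ = ∑ p : Fin (m' + 1), m'.factorial • T p := by
          apply Finset.sum_congr rfl
          intro p _
          rw [Finset.sum_const, Finset.card_univ, Fintype.card_perm, Fintype.card_fin]
      _ = m'.factorial • ∑ j : Fin (m' + 1), T j := Finset.smul_sum.symm
  have hcomp : ∑ j : Fin (m' + 1), T j
      = ∑ i : Fin n,
          F i • Finsupp.single ((F i + 1) ::ₘ lam.erase (F i)) (1 : K) := by
    rw [show (∑ j : Fin (m' + 1), T j) = ∑ j : Fin (m' + 1),
      (fun i => Finsupp.single ((F i + 1) ::ₘ lam.erase (F i)) (1 : K)) (f j) from rfl]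
    rw [Finset.sum_comp (fun i => Finsupp.single ((F i + 1) ::ₘ lam.erase (F i)) (1 : K)) f]
    rw [Finset.image_univ_of_surjective hf]
  have hmult : ∑ i : Fin n,
      F i • Finsupp.single ((F i + 1) ::ₘ lam.erase (F i)) (1 : K)
      = (lam.map fun a : ℕ =>
          (a : K) • Finsupp.single ((a + 1) ::ₘ lam.erase a) (1 : K)).sum := by
    rw [Finset.sum_congr rfl (fun i (_ : i ∈ Finset.univ) =>
      (Nat.cast_smul_eq_nsmul K (F i)
        (Finsupp.single ((F i + 1) ::ₘ lam.erase (F i)) (1 : K))).symm)]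
    calc ∑ i : Fin n, ((F i : K) •
          Finsupp.single ((F i + 1) ::ₘ lam.erase (F i)) (1 : K))
        = (Multiset.map ((fun a : ℕ => (a : K) •
            Finsupp.single ((a + 1) ::ₘ lam.erase a) (1 : K)) ∘ F)
            Finset.univ.val).sum := rfl
      _ = _ := by rw [← Multiset.map_map, hpf']
  rw [starElt, hsum1, hswap, hdec, hcomp, hmult]
  rw [← Nat.cast_smul_eq_nsmul K m'.factorial, smul_smul]
  congr 1
  have hfac0 : (m'.factorial : K) ≠ 0 := Nat.cast_ne_zero.mpr (Nat.factorial_ne_zero _)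
  have hfac : ((m' + 1).factorial : K) = ((m' + 1 : ℕ) : K) * (m'.factorial : K) := by
    rw [Nat.factorial_succ]; push_cast; ring
  rw [hfac, mul_inv, mul_assoc, inv_mul_cancel₀ hfac0, mul_one]

/-- for `λ = (λ₁ ≥ … ≥ λₙ) ∈ Part(m,n)` (a multiset `lam` of `n`
positive integers with sum `m`) and the partition `(2,1^{m−1}) ∈ Part(m+1,m)`,
the composite `δ_λ * δ_{(2,1^{m−1})}` equals `(1/m) Σ_{i=1}^n λ_i δ_{λ^{(i)}}`,
where `λ^{(i)}` replaces the part `λ_i` of `λ` by `λ_i + 1`, the sum running over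
the parts of `λ` counted with multiplicity. -/
theorem stmt12 (K : Type) [Field K] [CharZero K] {m n : ℕ} (hn : 1 ≤ n)
    (lam : Multiset ℕ) (hcard : Multiset.card lam = n) (hsum : lam.sum = m)
    (hpos : ∀ x ∈ lam, 0 < x) :
    starComp K m n (m + 1) (Finsupp.single lam 1)
        (Finsupp.single (2 ::ₘ Multiset.replicate (m - 1) 1) 1) =
      (m : K)⁻¹ •
        (lam.map fun a : ℕ =>
          (a : K) • Finsupp.single ((a + 1) ::ₘ lam.erase a) (1 : K)).sum := by
  classical
  have hm : 1 ≤ m := by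
    have hne : lam ≠ 0 := by
      intro h0
      rw [h0] at hcard
      simp at hcard
      omega
    obtain ⟨x, hx⟩ := Multiset.exists_mem_of_ne_zero hne
    have hxpos := hpos x hx
    have hle : x ≤ lam.sum := by
      have hce := Multiset.cons_erase hx
      calc x ≤ x + (lam.erase x).sum := Nat.le_add_right _ _
        _ = (x ::ₘ lam.erase x).sum := (Multiset.sum_cons _ _).symm
        _ = lam.sum := by rw [hce]
    omega
  have hex1 : ∃ f : Fin m → Fin n, Function.Surjective f ∧ proj f = lam :=
    exists_surj_proj lam hcard hsum hpos
  have hex2 : ∃ g : Fin (m + 1) → Fin m, Function.Surjective g ∧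
      proj g = 2 ::ₘ Multiset.replicate (m - 1) 1 := by
    apply exists_surj_proj
    · rw [Multiset.card_cons, Multiset.card_replicate]; omega
    · rw [Multiset.sum_cons, Multiset.sum_replicate, smul_eq_mul, mul_one]; omega
    · intro x hx
      rcases Multiset.mem_cons.mp hx with rfl | h
      · norm_num
      · rw [Multiset.eq_of_mem_replicate h]; norm_num
  rw [starComp, Finsupp.support_single_ne_zero _ (one_ne_zero (α := K)),
    Finsupp.support_single_ne_zero _ (one_ne_zero (α := K)),
    Finset.sum_singleton, Finset.sum_singleton, Finsupp.single_eq_same,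
    Finsupp.single_eq_same, one_mul, one_smul, starOf, dif_pos ⟨hex1, hex2⟩]
  exact starElt_eq K lam hm _ hex1.choose_spec.1 hex1.choose_spec.2
    _ hex2.choose_spec.1 hex2.choose_spec.2
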